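/- Let R be a quasiorder (reflexive transitive relation) on a set U. For X ⊆ U define X▼ = {x : R(x) ⊆ X} and X▲ = {x : R(x) ∩ X ≠ ∅}. Then for the rough set lattice RS = {(X▼, X▲) : X ⊆ U} ordered componentwise, with c(X▼,X▲) = ((X▲)ᶜ, (X▼)ᶜ), the Kleene inequality holds: for all rough sets x, y, x ∧ c(x) ≤ y ∨ c(y); hence RS with c is a Kleene algebra. -/
import Mathlib


variable {U : Type*}

/-- `R(x) = {y : x R y}`. -/
def rset (R : U → U → Prop) (x : U) : Set U := {y | R x y}

/-- Lower approximation `X▼ = {x : R(x) ⊆ X}`. -/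
def lap (R : U → U → Prop) (X : Set U) : Set U := {x | rset R x ⊆ X}

/-- Upper approximation `X▲ = {x : R(x) ∩ X ≠ ∅}`. -/
def uap (R : U → U → Prop) (X : Set U) : Set U := {x | (rset R x ∩ X).Nonempty}

/-- The set of rough sets determined by `R`. -/
def RS (R : U → U → Prop) : Set (Set U × Set U) := {p | ∃ X, p = (lap R X, uap R X)}

/-- The De Morgan complement on pairs: `c(X▼,X▲) = ((X▲)ᶜ, (X▼)ᶜ)`. -/
def cpair (p : Set U × Set U) : Set U × Set U := (p.2ᶜ, p.1ᶜ)

/-- Rough sets of a quasiorder satisfy the Kleene inequality (with componentwise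
lattice operations), and `c` maps the rough set of `X` to the rough set of `Xᶜ`;
hence `RS` with `c` is a Kleene algebra. -/
theorem roughSets_kleene (R : U → U → Prop) (hrefl : Reflexive R) (htrans : Transitive R) :
    (∀ X : Set U, cpair (lap R X, uap R X) = (lap R Xᶜ, uap R Xᶜ)) ∧
    (∀ X Y : Set U,
      ((lap R X, uap R X) ⊓ cpair (lap R X, uap R X) : Set U × Set U) ≤
        (lap R Y, uap R Y) ⊔ cpair (lap R Y, uap R Y)) := by
  have h1 : ∀ X : Set U, (uap R X)ᶜ = lap R Xᶜ := by
    intro X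
    ext x
    simp [uap, lap, Set.not_nonempty_iff_eq_empty, Set.eq_empty_iff_forall_notMem,
      Set.subset_def]
  have h2 : ∀ X : Set U, (lap R X)ᶜ = uap R Xᶜ := by
    intro X
    ext x
    simp [uap, lap, Set.not_subset, Set.Nonempty, Set.subset_def]
  constructor
  · intro X
    simp [cpair, h1, h2]
  · intro X Y
    simp only [cpair, h1, h2]
    constructor
    · intro x hx
      exfalso
      rcases hx with ⟨hA, hB⟩
      exact hB (hrefl x) (hA (hrefl x))
    · intro x _
      by_cases hxY : x ∈ Y
      · exact Or.inl ⟨x, hrefl x, hxY⟩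
      · exact Or.inr ⟨x, hrefl x, hxY⟩
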